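/- Let $e > 0$ and let $f, g : (0,\infty) \to \mathbb{R}$ be $C^2$ functions with $g(r) > 0$ and $f(r) > 0$ for all $r > 0$, satisfying $g'' + \frac{2}{r} g' = e^2 g f^2$ on $(0,\infty)$, with $r^2 g'(r) \to 0$ as $r \to 0^+$. Then $g'(r) > 0$ for all $r > 0$; in particular $g$ is strictly increasing on $(0,\infty)$. -/

import Mathlib

theorem g_strictly_increasing (e : ℝ) (he : 0 < e) (f g g' g'' : ℝ → ℝ)
    (hgpos : ∀ r > 0, 0 < g r) (hfpos : ∀ r > 0, 0 < f r)
    (hd1 : ∀ r ∈ Set.Ioi (0 : ℝ), HasDerivAt g (g' r) r)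
    (hd2 : ∀ r ∈ Set.Ioi (0 : ℝ), HasDerivAt g' (g'' r) r)
    (heq : ∀ r > 0, g'' r + 2 / r * g' r = e ^ 2 * g r * (f r) ^ 2)
    (hbc : Filter.Tendsto (fun r => r ^ 2 * g' r) (nhdsWithin 0 (Set.Ioi 0)) (nhds 0)) :
    (∀ r > 0, 0 < g' r) ∧ StrictMonoOn g (Set.Ioi 0) := by
  set h : ℝ → ℝ := fun r => r ^ 2 * g' r with hh
  have hder : ∀ r ∈ Set.Ioi (0 : ℝ), HasDerivAt h (r ^ 2 * (e ^ 2 * g r * f r ^ 2)) r := by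
    intro r hr
    have hr0 : (0 : ℝ) < r := hr
    have h1 : HasDerivAt (fun x : ℝ => x ^ 2) (2 * r) r := by
      simpa using (hasDerivAt_pow 2 r)
    have h2 : HasDerivAt h (2 * r * g' r + r ^ 2 * g'' r) r := h1.mul (hd2 r hr)
    convert h2 using 1
    have heqr := heq r hr0
    have key : r ^ 2 * (g'' r + 2 / r * g' r) = r ^ 2 * (e ^ 2 * g r * f r ^ 2) := by
      rw [heqr]
    have hrne : r ≠ 0 := ne_of_gt hr0
    field_simp at key
    nlinarith [key, congrArg (fun t => r * t) key]
  have hcont : ContinuousOn h (Set.Ioi 0) := fun r hr =>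
    ((hder r hr).continuousAt).continuousWithinAt
  have hmono : StrictMonoOn h (Set.Ioi 0) := by
    apply strictMonoOn_of_deriv_pos (convex_Ioi 0) hcont
    intro x hx
    rw [interior_Ioi] at hx
    rw [(hder x hx).deriv]
    have hx0 : (0 : ℝ) < x := hx
    have := hgpos x hx0
    have := hfpos x hx0
    positivity
  have hpos : ∀ r > 0, 0 < h r := by
    intro r hr
    have hs : (0 : ℝ) < r / 2 := by linarith
    have h1 : h (r / 2) < h r := hmono hs hr (by linarith)
    have h0 : (0 : ℝ) ≤ h (r / 2) := by
      refine le_of_tendsto hbc ?_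
      filter_upwards [Ioo_mem_nhdsGT_of_mem ⟨le_refl (0 : ℝ), hs⟩] with x hx
      exact (hmono hx.1 hs hx.2).le
    linarith
  have hg'pos : ∀ r > 0, 0 < g' r := by
    intro r hr
    have := hpos r hr
    have hr2 : (0 : ℝ) < r ^ 2 := by positivity
    simp only [hh] at this
    nlinarith
  refine ⟨hg'pos, ?_⟩
  apply strictMonoOn_of_deriv_pos (convex_Ioi 0)
    (fun r hr => ((hd1 r hr).continuousAt).continuousWithinAt)
  intro x hx
  rw [interior_Ioi] at hx
  rw [(hd1 x hx).deriv]
  exact hg'pos x hx
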